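/- Let A be a KV-algebra over a field F of characteristic zero and W a left KV-module of A, and let θ : W × W → W be a bilinear map. On G := A ⊕ W define the multiplication (a,w)(a',w') := (aa', aw' + θ(w,w')). Then this multiplication is left-symmetric (makes G a KV-algebra) if and only if both of the following hold: (i) a·θ(w,w') = θ(aw,w') + θ(w,aw') for all a ∈ A and w,w' ∈ W; and (ii) θ(w,θ(w',w'')) − θ(θ(w,w'),w'') = θ(w',θ(w,w'')) − θ(θ(w',w),w'') for all w,w',w'' ∈ W (θ is a KV-multiplication on W). -/
import Mathlib


/-- Proposition 10.1: for a left KV-module `W` of a KV-algebra `A`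
and a bilinear `θ : W × W → W`, the multiplication
`(a,w)(a',w') := (aa', aw' + θ(w,w'))` on `G = A ⊕ W` is left-symmetric if and only
if (i) `a·θ(w,w') = θ(aw,w') + θ(w,aw')` and (ii) `θ` is a KV-multiplication on `W`. -/
theorem connectionlike_deformation_iff
    {F : Type*} [Field F] [CharZero F]
    {A : Type*} [AddCommGroup A] [Module F A]
    {W : Type*} [AddCommGroup W] [Module F W]
    (mul : A →ₗ[F] A →ₗ[F] A)
    (hA : ∀ a b c : A, mul (mul a b) c - mul a (mul b c)
        = mul (mul b a) c - mul b (mul a c))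
    (l : A →ₗ[F] W →ₗ[F] W)
    (hW1 : ∀ (a b : A) (w : W), l (mul a b) w - l a (l b w)
        = l (mul b a) w - l b (l a w))
    (θ : W →ₗ[F] W →ₗ[F] W) :
    letI mulG : A × W → A × W → A × W :=
      fun x y => (mul x.1 y.1, l x.1 y.2 + θ x.2 y.2)
    (∀ x y z : A × W, mulG (mulG x y) z - mulG x (mulG y z)
        = mulG (mulG y x) z - mulG y (mulG x z))
    ↔ ((∀ (a : A) (w w' : W), l a (θ w w') = θ (l a w) w' + θ w (l a w'))
        ∧ (∀ w w' w'' : W,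
            θ w (θ w' w'') - θ (θ w w') w''
              = θ w' (θ w w'') - θ (θ w' w) w'')) := by
  constructor
  · intro h
    constructor
    · intro a w w'
      have h1 := congrArg Prod.snd (h (a, 0) (0, w) (0, w'))
      simp only [Prod.snd_sub, map_zero, LinearMap.zero_apply, zero_add, add_zero,
        map_add, LinearMap.add_apply] at h1
      linear_combination (norm := abel_nf) -h1
    · intro w w' w''
      have h2 := congrArg Prod.snd (h (0, w) (0, w') (0, w''))
      simp only [Prod.snd_sub, map_zero, LinearMap.zero_apply, zero_add, add_zero,
        map_add, LinearMap.add_apply] at h2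
      linear_combination (norm := abel_nf) -h2
  · rintro ⟨h1, h2⟩ x y z
    obtain ⟨a, w⟩ := x
    obtain ⟨b, v⟩ := y
    obtain ⟨c, u⟩ := z
    refine Prod.ext (by simpa using hA a b c) ?_
    simp only [Prod.snd_sub, map_add, LinearMap.add_apply]
    have e1 := hW1 a b u
    have e2 := h1 a v u
    have e3 := h1 b w u
    have e4 := h2 w v u
    linear_combination (norm := abel_nf) e1 - e2 + e3 - e4
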